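/- Let A ∈ ℝ^{m×n} with rank(A) = m < n. Suppose there exist constants C₁, C₂ ≥ 0 such that for every τ ≥ 0, every y ∈ ℝ^m, and every x ∈ ℝⁿ with ‖Aᵀ(Ax − y)‖_∞ ≤ τ, there exists an optimal solution x* of the standard Dantzig selector problem min{‖z‖₁ : ‖Aᵀ(Az − y)‖_∞ ≤ τ} satisfying ‖x − x*‖₂ ≤ C₁·σ_k(x)₁ + C₂·τ. Then Aᵀ satisfies the weak range space property (weak RSP) of order k. -/

import Mathlib

open Matrix
open scoped Classical

/-- The ℓ₁ norm on `Fin n → ℝ`. -/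
noncomputable def l1norm {n : ℕ} (x : Fin n → ℝ) : ℝ := ∑ i, |x i|

/-- The Euclidean (ℓ₂) norm on `Fin n → ℝ`. -/
noncomputable def l2norm {n : ℕ} (x : Fin n → ℝ) : ℝ := Real.sqrt (∑ i, (x i) ^ 2)

/-- The ℓ_∞ norm on `Fin n → ℝ`. -/
noncomputable def linfnorm {n : ℕ} (x : Fin n → ℝ) : ℝ := ⨆ i, |x i|

/-- The best `k`-term approximation error `σ_k(x)₁`. -/
noncomputable def bestKTerm {n : ℕ} (k : ℕ) (x : Fin n → ℝ) : ℝ :=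
  sInf {t : ℝ | ∃ u : Fin n → ℝ,
    (Finset.univ.filter (fun i => u i ≠ 0)).card ≤ k ∧ t = l1norm (x - u)}

/-- `Aᵀ` satisfies the weak range space property of order `k`. -/
def WeakRSP {m n : ℕ} (A : Matrix (Fin m) (Fin n) ℝ) (k : ℕ) : Prop :=
  ∀ S₁ S₂ : Finset (Fin n), Disjoint S₁ S₂ → S₁.card + S₂.card ≤ k →
    ∃ u : Fin m → ℝ,
      (∀ i ∈ S₁, Aᵀ.mulVec u i = 1) ∧
      (∀ i ∈ S₂, Aᵀ.mulVec u i = -1) ∧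
      (∀ i, i ∉ S₁ → i ∉ S₂ → |Aᵀ.mulVec u i| ≤ 1)

section Aux

lemma perp_ker_mem_range {m n : ℕ} (A : Matrix (Fin m) (Fin n) ℝ) (ζ : Fin n → ℝ)
    (hperp : ∀ h : Fin n → ℝ, A.mulVec h = 0 → ∑ i, h i * ζ i = 0) :
    ∃ u : Fin m → ℝ, Aᵀ.mulVec u = ζ := by
  classical
  set e : EuclideanSpace ℝ (Fin n) ≃ₗ[ℝ] (Fin n → ℝ) := WithLp.linearEquiv 2 ℝ (Fin n → ℝ)
  set K : Submodule ℝ (EuclideanSpace ℝ (Fin n)) :=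
    (LinearMap.range ((Aᵀ).mulVecLin)).comap e.toLinearMap with hK
  have hmem : e.symm ζ ∈ Kᗮᗮ := by
    rw [Submodule.mem_orthogonal]
    intro q hq
    have hAq : A.mulVec (e q) = 0 := by
      funext j
      have hw : e.symm ((Aᵀ).mulVec (Pi.single j 1)) ∈ K := by
        rw [hK, Submodule.mem_comap]
        exact ⟨Pi.single j 1, by simp [e]⟩
      have h2 := (Submodule.mem_orthogonal K q).mp hq _ hw
      rw [PiLp.inner_apply] at h2
      simp only [e, WithLp.linearEquiv_symm_apply, PiLp.toLp_apply,
        RCLike.inner_apply, starRingEnd_apply, star_trivial] at h2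
      have h3 : ∑ i, A j i * q i = 0 := by
        rw [← h2]
        refine Finset.sum_congr rfl fun i _ => ?_
        simp [Matrix.mulVec, dotProduct, Pi.single_apply, mul_comm]
      simpa [Matrix.mulVec, dotProduct, e] using h3
    have h0 := hperp (e q) hAq
    rw [PiLp.inner_apply]
    simp only [e, RCLike.inner_apply, starRingEnd_apply, star_trivial,
      WithLp.linearEquiv_symm_apply, PiLp.toLp_apply]
    simpa [e, WithLp.linearEquiv_apply, WithLp.coe_linearEquiv, mul_comm] using h0
  rw [Submodule.orthogonal_orthogonal] at hmem
  obtain ⟨u, hu⟩ := hmem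
  exact ⟨u, by rw [show Aᵀ *ᵥ u = Aᵀ.mulVecLin u from rfl, hu]; exact e.apply_symm_apply ζ⟩


lemma l1norm_nonneg {n : ℕ} (x : Fin n → ℝ) : 0 ≤ l1norm x :=
  Finset.sum_nonneg fun _ _ => abs_nonneg _

lemma l1norm_zero {n : ℕ} : l1norm (0 : Fin n → ℝ) = 0 := by simp [l1norm]

lemma l1norm_smul {n : ℕ} (c : ℝ) (x : Fin n → ℝ) : l1norm (c • x) = |c| * l1norm x := by
  simp [l1norm, abs_mul, Finset.mul_sum]

lemma l1norm_add_le {n : ℕ} (x y : Fin n → ℝ) : l1norm (x + y) ≤ l1norm x + l1norm y := by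
  rw [l1norm, l1norm, l1norm, ← Finset.sum_add_distrib]
  exact Finset.sum_le_sum fun i _ => abs_add_le _ _

lemma key_subgrad {m n : ℕ} (A : Matrix (Fin m) (Fin n) ℝ) (x : Fin n → ℝ)
    (hx0 : x ≠ 0)
    (hmin : ∀ h : Fin n → ℝ, A.mulVec h = 0 → l1norm x ≤ l1norm (x + h)) :
    ∃ ζ : Fin n → ℝ, (∀ h : Fin n → ℝ, A.mulVec h = 0 → ∑ i, h i * ζ i = 0) ∧
      (∀ i, |ζ i| ≤ 1) ∧ ∑ i, x i * ζ i = l1norm x := by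
  classical
  set V : Submodule ℝ (Fin n → ℝ) := LinearMap.ker A.mulVecLin with hV
  have hl1pos : 0 < l1norm x := by
    rcases (l1norm_nonneg x).lt_or_eq with h | h
    · exact h
    · exfalso; apply hx0; funext i
      have := (Finset.sum_eq_zero_iff_of_nonneg (fun i _ => abs_nonneg (x i))).mp h.symm i
        (Finset.mem_univ i)
      simpa [abs_eq_zero] using this
  have hxV : x ∉ V := by
    intro hx
    have hAx : A.mulVec x = 0 := hx
    have h2 := hmin (-x) (by rw [Matrix.mulVec_neg, hAx, neg_zero])
    rw [add_neg_cancel, l1norm_zero] at h2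
    linarith
  have hq0 : V.mkQ x ≠ 0 := by
    rw [Submodule.mkQ_apply, ne_eq, Submodule.Quotient.mk_eq_zero]; exact hxV
  obtain ⟨φ, hφ⟩ : ∃ φ : Module.Dual ℝ ((Fin n → ℝ) ⧸ V), φ (V.mkQ x) ≠ 0 := by
    by_contra hcon
    push_neg at hcon
    exact hq0 ((Module.forall_dual_apply_eq_zero_iff ℝ _).mp hcon)
  set g : (Fin n → ℝ) →ₗ[ℝ] ℝ := (l1norm x / φ (V.mkQ x)) • (φ.comp V.mkQ) with hg
  have hgV : ∀ v ∈ V, g v = 0 := by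
    intro v hv
    simp [hg, (Submodule.Quotient.mk_eq_zero V).mpr hv]
  have hgx : g x = l1norm x := by
    have hφ' : φ (Submodule.Quotient.mk x) ≠ 0 := by rw [← Submodule.mkQ_apply]; exact hφ
    simp only [hg, LinearMap.smul_apply, LinearMap.coe_comp, Function.comp_apply,
      Submodule.mkQ_apply, smul_eq_mul]
    rw [div_mul_cancel₀ _ hφ']
  set p : Submodule ℝ (Fin n → ℝ) := V ⊔ (ℝ ∙ x) with hp
  have hbound : ∀ w : p, (g.domRestrict p) w ≤ l1norm (w : Fin n → ℝ) := by
    rintro ⟨w, hw⟩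
    obtain ⟨v, hv, s, hs, rfl⟩ := Submodule.mem_sup.mp hw
    obtain ⟨t, rfl⟩ := Submodule.mem_span_singleton.mp hs
    simp only [LinearMap.domRestrict_apply]
    rw [map_add, hgV v hv, g.map_smul, hgx, smul_eq_mul, zero_add]
    rcases eq_or_ne t 0 with rfl | ht
    · simpa using l1norm_nonneg (v + (0:ℝ) • x)
    · have hscale : l1norm (v + t • x) = |t| * l1norm (t⁻¹ • v + x) := by
        rw [← l1norm_smul t]
        congr 1
        rw [smul_add, smul_smul, mul_inv_cancel₀ ht, one_smul]
      have hv2 : A.mulVec (t⁻¹ • v) = 0 := by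
        have h3 : A.mulVecLin (t⁻¹ • v) = 0 := by
          rw [A.mulVecLin.map_smul, show A.mulVecLin v = 0 from hv, smul_zero]
        exact h3
      have h4 := hmin (t⁻¹ • v) hv2
      calc t * l1norm x ≤ |t| * l1norm x :=
            mul_le_mul_of_nonneg_right (le_abs_self t) (le_of_lt hl1pos)
        _ ≤ |t| * l1norm (x + t⁻¹ • v) := mul_le_mul_of_nonneg_left h4 (abs_nonneg t)
        _ = l1norm (v + t • x) := by rw [hscale, add_comm]
  obtain ⟨g', hg'eq, hg'le⟩ := exists_extension_of_le_sublinear ⟨p, g.domRestrict p⟩ l1norm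
    (fun c hc z => by rw [l1norm_smul, abs_of_pos hc]) l1norm_add_le hbound
  set ζ : Fin n → ℝ := fun i => g' (Pi.single i (1:ℝ)) with hζ
  have hrep : ∀ z : Fin n → ℝ, g' z = ∑ i, z i * ζ i := by
    intro z
    have hz : z = ∑ i, z i • (Pi.single i (1:ℝ) : Fin n → ℝ) := by
      funext j
      rw [Finset.sum_apply]
      simp [Pi.single_apply]
    conv_lhs => rw [hz]
    rw [map_sum]
    exact Finset.sum_congr rfl fun i _ => by rw [g'.map_smul, smul_eq_mul]
  have hsingle : ∀ i : Fin n, l1norm (Pi.single i (1:ℝ) : Fin n → ℝ) = 1 := by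
    intro i
    simp [l1norm, Pi.single_apply, apply_ite abs]
  have habs : ∀ i, |ζ i| ≤ 1 := by
    intro i
    rw [abs_le]
    constructor
    · have h5 := hg'le (-(Pi.single i (1:ℝ) : Fin n → ℝ))
      have hneg : l1norm (-(Pi.single i (1:ℝ) : Fin n → ℝ)) = 1 := by
        rw [show -(Pi.single i (1:ℝ) : Fin n → ℝ) = (-1 : ℝ) • (Pi.single i (1:ℝ) : Fin n → ℝ)
          by simp, l1norm_smul, hsingle i]
        norm_num
      rw [map_neg, hneg] at h5
      linarith
    · have h5 := hg'le (Pi.single i (1:ℝ))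
      rw [hsingle i] at h5
      exact h5
  have hperp : ∀ h : Fin n → ℝ, A.mulVec h = 0 → ∑ i, h i * ζ i = 0 := by
    intro h hh
    have hhp : h ∈ p := Submodule.mem_sup_left (show h ∈ V from hh)
    have h6 := hg'eq ⟨h, hhp⟩
    rw [← hrep]
    simpa [hgV h hh] using h6
  have hxp : x ∈ p := Submodule.mem_sup_right (Submodule.mem_span_singleton_self x)
  have hgx' : ∑ i, x i * ζ i = l1norm x := by
    have h7 := hg'eq ⟨x, hxp⟩
    rw [← hrep]
    simpa [hgx] using h7
  exact ⟨ζ, hperp, habs, hgx'⟩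

end Aux

/-- Corollary 3.4 (converse direction): if the standard Dantzig selector is stable
with error bound `C₁ σ_k(x)₁ + C₂ τ` for all `τ ≥ 0`, all `y` and all feasible `x`,
then `Aᵀ` satisfies the weak RSP of order `k`. -/
theorem standard_DS_stability_implies_weakRSP (m n k : ℕ) (hmn : m < n)
    (A : Matrix (Fin m) (Fin n) ℝ) (hArank : A.rank = m)
    (C₁ C₂ : ℝ) (hC₁ : 0 ≤ C₁) (hC₂ : 0 ≤ C₂)
    (hstable : ∀ τ : ℝ, 0 ≤ τ → ∀ y : Fin m → ℝ, ∀ x : Fin n → ℝ,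
      linfnorm (Aᵀ.mulVec (A.mulVec x - y)) ≤ τ →
      ∃ xstar : Fin n → ℝ,
        (linfnorm (Aᵀ.mulVec (A.mulVec xstar - y)) ≤ τ ∧
          ∀ z : Fin n → ℝ, linfnorm (Aᵀ.mulVec (A.mulVec z - y)) ≤ τ →
            l1norm xstar ≤ l1norm z) ∧
        l2norm (x - xstar) ≤ C₁ * bestKTerm k x + C₂ * τ) :
    WeakRSP A k := by
  intro S₁ S₂ hdisj hk
  haveI : Nonempty (Fin n) := ⟨⟨0, Nat.lt_of_le_of_lt (Nat.zero_le m) hmn⟩⟩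
  have hlinf0 : linfnorm (0 : Fin n → ℝ) = 0 := by simp [linfnorm, ciSup_const]
  set x : Fin n → ℝ := fun i => if i ∈ S₁ then 1 else if i ∈ S₂ then -1 else 0 with hx
  have habsx : ∀ i, |x i| = if i ∈ S₁ ∪ S₂ then (1:ℝ) else 0 := by
    intro i
    by_cases h1 : i ∈ S₁ <;> by_cases h2 : i ∈ S₂ <;>
      simp [hx, h1, h2, Finset.mem_union]
  have hl1x : l1norm x = (S₁.card : ℝ) + S₂.card := by
    rw [l1norm]
    simp only [habsx]
    rw [Finset.sum_ite_mem, Finset.univ_inter, Finset.sum_const,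
      Finset.card_union_of_disjoint hdisj]
    push_cast
    ring
  -- σ_k(x)₁ = 0
  have hbk : bestKTerm k x = 0 := by
    have hmem0 : (0:ℝ) ∈ {t : ℝ | ∃ u : Fin n → ℝ,
        (Finset.univ.filter (fun i => u i ≠ 0)).card ≤ k ∧ t = l1norm (x - u)} := by
      refine ⟨x, ?_, by simp [l1norm]⟩
      refine le_trans (Finset.card_le_card (t := S₁ ∪ S₂) ?_) ?_
      · intro i hi
        simp only [Finset.mem_filter] at hi
        by_contra hiu
        simp only [Finset.mem_union, not_or] at hiu
        exact hi.2 (by simp [hx, hiu.1, hiu.2])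
      · exact le_trans (le_of_eq (Finset.card_union_of_disjoint hdisj)) hk
    have hlb : ∀ t ∈ {t : ℝ | ∃ u : Fin n → ℝ,
        (Finset.univ.filter (fun i => u i ≠ 0)).card ≤ k ∧ t = l1norm (x - u)}, (0:ℝ) ≤ t := by
      rintro t ⟨u, _, rfl⟩
      exact l1norm_nonneg _
    exact le_antisymm (csInf_le ⟨0, hlb⟩ hmem0) (le_csInf ⟨0, hmem0⟩ hlb)
  -- apply stability at τ = 0, y = Ax
  obtain ⟨xstar, ⟨hfeas, hopt⟩, herr⟩ := hstable 0 le_rfl (A.mulVec x) x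
    (by rw [sub_self, Matrix.mulVec_zero, hlinf0])
  have hxeq : x = xstar := by
    rw [hbk] at herr
    have h0 : l2norm (x - xstar) ≤ 0 := by linarith [herr]
    have h1 : Real.sqrt (∑ i, (x i - xstar i)^2) ≤ 0 := by
      simpa [l2norm] using h0
    have h2 : ∑ i, (x i - xstar i)^2 ≤ 0 := by
      by_contra hcon
      push_neg at hcon
      have := Real.sqrt_pos.mpr hcon
      linarith
    have h3 : ∑ i, (x i - xstar i)^2 = 0 :=
      le_antisymm h2 (Finset.sum_nonneg fun i _ => sq_nonneg _)
    funext i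
    have := (Finset.sum_eq_zero_iff_of_nonneg (fun i _ => sq_nonneg (x i - xstar i))).mp h3 i
      (Finset.mem_univ i)
    have := (pow_eq_zero_iff two_ne_zero).mp this
    linarith [sub_eq_zero.mp this]
  have hmin : ∀ h : Fin n → ℝ, A.mulVec h = 0 → l1norm x ≤ l1norm (x + h) := by
    intro h hh
    have hfz : linfnorm (Aᵀ.mulVec (A.mulVec (x + h) - A.mulVec x)) ≤ 0 := by
      rw [Matrix.mulVec_add, add_sub_cancel_left, hh, Matrix.mulVec_zero, hlinf0]
    have := hopt (x + h) hfz
    rwa [← hxeq] at this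
  -- trivial case
  by_cases hS : S₁ = ∅ ∧ S₂ = ∅
  · refine ⟨0, ?_, ?_, ?_⟩
    · intro i hi; rw [hS.1] at hi; exact absurd hi (Finset.notMem_empty i)
    · intro i hi; rw [hS.2] at hi; exact absurd hi (Finset.notMem_empty i)
    · intro i _ _; simp [Matrix.mulVec_zero]
  -- x ≠ 0
  have hx0 : x ≠ 0 := by
    intro hxz
    apply hS
    constructor <;> (ext i; simp only [Finset.notMem_empty, iff_false])
    · intro hi
      have : x i = 1 := by simp [hx, hi]
      rw [hxz] at this; norm_num at this
    · intro hi
      have : x i = -1 := by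
        simp only [hx]
        rw [if_neg (Finset.disjoint_right.mp hdisj hi), if_pos hi]
      rw [hxz] at this; norm_num at this
  obtain ⟨ζ, hperp, habs, hsum⟩ := key_subgrad A x hx0 hmin
  -- forcing the sign pattern
  have hsum2 : ∑ i, x i * ζ i = ∑ i ∈ S₁, ζ i - ∑ i ∈ S₂, ζ i := by
    have hterm : ∀ i, x i * ζ i =
        (if i ∈ S₁ then ζ i else 0) + (if i ∈ S₂ then -ζ i else 0) := by
      intro i
      by_cases h1 : i ∈ S₁
      · rw [if_pos h1, if_neg (Finset.disjoint_left.mp hdisj h1)]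
        simp [hx, h1]
      · by_cases h2 : i ∈ S₂
        · rw [if_neg h1, if_pos h2]
          simp [hx, h1, h2]
        · simp [hx, h1, h2]
    simp only [hterm]
    rw [Finset.sum_add_distrib, Finset.sum_ite_mem, Finset.sum_ite_mem, Finset.univ_inter,
      Finset.univ_inter, Finset.sum_neg_distrib]
    ring
  have hT : ∑ i ∈ S₁, (1 - ζ i) + ∑ i ∈ S₂, (1 + ζ i) = 0 := by
    rw [Finset.sum_sub_distrib, Finset.sum_add_distrib, Finset.sum_const, Finset.sum_const]
    have := hsum2 ▸ hsum
    rw [hl1x] at this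
    simp only [nsmul_eq_mul, mul_one]
    linarith
  have hnn1 : ∀ i ∈ S₁, (0:ℝ) ≤ 1 - ζ i := fun i _ => by linarith [(abs_le.mp (habs i)).2]
  have hnn2 : ∀ i ∈ S₂, (0:ℝ) ≤ 1 + ζ i := fun i _ => by linarith [(abs_le.mp (habs i)).1]
  have hz1 : ∑ i ∈ S₁, (1 - ζ i) = 0 := by
    have h1 := Finset.sum_nonneg hnn1
    have h2 := Finset.sum_nonneg hnn2
    linarith
  have hz2 : ∑ i ∈ S₂, (1 + ζ i) = 0 := by
    have h1 := Finset.sum_nonneg hnn1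
    linarith
  obtain ⟨u, hu⟩ := perp_ker_mem_range A ζ hperp
  refine ⟨u, ?_, ?_, ?_⟩
  · intro i hi
    have := (Finset.sum_eq_zero_iff_of_nonneg hnn1).mp hz1 i hi
    rw [hu]
    linarith
  · intro i hi
    have := (Finset.sum_eq_zero_iff_of_nonneg hnn2).mp hz2 i hi
    rw [hu]
    linarith
  · intro i _ _
    rw [hu]
    exact habs i
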